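/- Let n and λ be real numbers, θ1 > 0, α = (2−n)/2, and L = λ − n(n−2)/4. Suppose y1, y2 : (0,θ1) → ℝ are three times differentiable and each satisfies y''(θ) + coth(θ)·y'(θ) + (L − α²/sinh²(θ))·y(θ) = 0 on (0,θ1). Then T(θ) := sinh^{4−n}(θ)·y1(θ)·y2(θ) satisfies, for all θ ∈ (0,θ1): (1/4)·T'''(θ) + (3/4)·(n−3)·coth(θ)·T''(θ) + ( (1/4)·(n−3)·(2n−11)·coth²(θ) + λ + (1/4)·(n−7) )·T'(θ) + (n−3)·( (λ−2)·coth(θ) − (n−4)·coth³(θ) )·T(θ) = 0. -/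

import Mathlib

open Real Set

noncomputable section

/-- The hyperbolic cotangent. -/
def Real.coth (x : ℝ) : ℝ := Real.cosh x / Real.sinh x

private lemma coth_hasDerivAt {x : ℝ} (hx : Real.sinh x ≠ 0) :
    HasDerivAt Real.coth (1 - Real.coth x ^ 2) x := by
  have h := (Real.hasDerivAt_cosh x).div (Real.hasDerivAt_sinh x) hx
  have he : Real.coth = fun y => Real.cosh y / Real.sinh y := rfl
  rw [he]
  refine h.congr_deriv ?_
  beta_reduce
  field_simp

private lemma one_div_sinh_sq {x : ℝ} (hx : Real.sinh x ≠ 0) :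
    1 / Real.sinh x ^ 2 = Real.coth x ^ 2 - 1 := by
  unfold Real.coth
  field_simp
  rw [Real.cosh_sq]
  ring

private lemma cosh_div_sinh_cube {x : ℝ} (hx : Real.sinh x ≠ 0) :
    Real.cosh x / Real.sinh x ^ 3 = Real.coth x * (Real.coth x ^ 2 - 1) := by
  unfold Real.coth
  rw [div_pow, Real.cosh_sq]
  field_simp
  all_goals simp [mul_pow, pow_succ, mul_comm]

private lemma step_lemma (θ1 p : ℝ) (f f' F F' : ℝ → ℝ)
    (hf : ∀ t ∈ Ioo (0:ℝ) θ1, HasDerivAt f (f' t) t)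
    (hF : ∀ t ∈ Ioo (0:ℝ) θ1, HasDerivAt F (F' t) t)
    (hEq : ∀ t ∈ Ioo (0:ℝ) θ1, F t = Real.sinh t ^ p * f t) :
    ∀ t ∈ Ioo (0:ℝ) θ1, F' t = Real.sinh t ^ p * (p * Real.coth t * f t + f' t) := by
  intro t ht
  have hs : 0 < Real.sinh t := Real.sinh_pos_iff.2 ht.1
  have hsne : Real.sinh t ≠ 0 := ne_of_gt hs
  have h1 : HasDerivAt (fun u => Real.sinh u ^ p) (Real.cosh t * p * Real.sinh t ^ (p - 1)) t :=
    (Real.hasDerivAt_sinh t).rpow_const (Or.inl hsne)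
  have h2 := h1.mul (hf t ht)
  have h3 : HasDerivAt F (Real.cosh t * p * Real.sinh t ^ (p - 1) * f t + Real.sinh t ^ p * f' t) t := by
    refine h2.congr_of_eventuallyEq ?_
    filter_upwards [isOpen_Ioo.mem_nhds ht] with u hu
    exact hEq u hu
  rw [(hF t ht).unique h3]
  rw [Real.rpow_sub hs, Real.rpow_one]
  unfold Real.coth
  field_simp

private lemma deriv_comb (θ1 p : ℝ) (f f' f'' : ℝ → ℝ)
    (hf : ∀ t ∈ Ioo (0:ℝ) θ1, HasDerivAt f (f' t) t)
    (hf' : ∀ t ∈ Ioo (0:ℝ) θ1, HasDerivAt f' (f'' t) t) :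
    ∀ t ∈ Ioo (0:ℝ) θ1, HasDerivAt (fun u => p * Real.coth u * f u + f' u)
      (p * (1 - Real.coth t ^ 2) * f t + p * Real.coth t * f' t + f'' t) t := by
  intro t ht
  have hk := coth_hasDerivAt (ne_of_gt (Real.sinh_pos_iff.2 ht.1))
  have h := (((hasDerivAt_const t p).mul hk).mul (hf t ht)).add (hf' t ht)
  refine h.congr_deriv ?_
  simp only [Pi.mul_apply, Pi.sub_apply, Pi.pow_apply, Pi.add_apply]
  ring

private lemma deriv_comb2 (θ1 p : ℝ) (f f' f'' f''' : ℝ → ℝ)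
    (hf : ∀ t ∈ Ioo (0:ℝ) θ1, HasDerivAt f (f' t) t)
    (hf' : ∀ t ∈ Ioo (0:ℝ) θ1, HasDerivAt f' (f'' t) t)
    (hf'' : ∀ t ∈ Ioo (0:ℝ) θ1, HasDerivAt f'' (f''' t) t) :
    ∀ t ∈ Ioo (0:ℝ) θ1, HasDerivAt
      (fun u => p * (1 - Real.coth u ^ 2) * f u + p * Real.coth u * f' u + f'' u)
      (p * (-(2 * Real.coth t * (1 - Real.coth t ^ 2))) * f t
        + p * (1 - Real.coth t ^ 2) * f' t
        + (p * (1 - Real.coth t ^ 2) * f' t + p * Real.coth t * f'' t)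
        + f''' t) t := by
  intro t ht
  have hk := coth_hasDerivAt (ne_of_gt (Real.sinh_pos_iff.2 ht.1))
  have h := ((((hasDerivAt_const t p).mul ((hasDerivAt_const t (1:ℝ)).sub (hk.pow 2))).mul
      (hf t ht)).add (((hasDerivAt_const t p).mul hk).mul (hf' t ht))).add (hf'' t ht)
  refine h.congr_deriv ?_
  push_cast
  simp only [Pi.mul_apply, Pi.sub_apply, Pi.pow_apply, Pi.add_apply]
  ring
/-- The Lemma of Section 4: if `y1`, `y2` both solve the Legendre-type equation
`y'' + coth θ · y' + (L - α²/sinh²θ) y = 0` with `α = (2-n)/2` and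
`L = λ - n(n-2)/4`, then `T(θ) = sinh^{4-n}(θ) y1(θ) y2(θ)` solves the
third-order equation (4.10) annihilating the Pohozaev coefficient `A`. -/
theorem product_solves_third_order (n lam θ1 α L : ℝ) (hθ1 : 0 < θ1)
    (hα : α = (2 - n) / 2) (hL : L = lam - n * (n - 2) / 4)
    (y1 y1' y1'' y1''' y2 y2' y2'' y2''' : ℝ → ℝ)
    (hy1 : ∀ θ ∈ Ioo (0:ℝ) θ1, HasDerivAt y1 (y1' θ) θ)
    (hy1' : ∀ θ ∈ Ioo (0:ℝ) θ1, HasDerivAt y1' (y1'' θ) θ)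
    (hy1'' : ∀ θ ∈ Ioo (0:ℝ) θ1, HasDerivAt y1'' (y1''' θ) θ)
    (hy2 : ∀ θ ∈ Ioo (0:ℝ) θ1, HasDerivAt y2 (y2' θ) θ)
    (hy2' : ∀ θ ∈ Ioo (0:ℝ) θ1, HasDerivAt y2' (y2'' θ) θ)
    (hy2'' : ∀ θ ∈ Ioo (0:ℝ) θ1, HasDerivAt y2'' (y2''' θ) θ)
    (hode1 : ∀ θ ∈ Ioo (0:ℝ) θ1,
      y1'' θ + Real.coth θ * y1' θ + (L - α ^ 2 / Real.sinh θ ^ 2) * y1 θ = 0)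
    (hode2 : ∀ θ ∈ Ioo (0:ℝ) θ1,
      y2'' θ + Real.coth θ * y2' θ + (L - α ^ 2 / Real.sinh θ ^ 2) * y2 θ = 0)
    (T T' T'' T''' : ℝ → ℝ)
    (hT : T = fun θ : ℝ => Real.sinh θ ^ (4 - n) * y1 θ * y2 θ)
    (hT' : ∀ θ ∈ Ioo (0:ℝ) θ1, HasDerivAt T (T' θ) θ)
    (hT'' : ∀ θ ∈ Ioo (0:ℝ) θ1, HasDerivAt T' (T'' θ) θ)
    (hT''' : ∀ θ ∈ Ioo (0:ℝ) θ1, HasDerivAt T'' (T''' θ) θ) :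
    ∀ θ ∈ Ioo (0:ℝ) θ1,
      (1 / 4) * T''' θ + (3 / 4) * (n - 3) * Real.coth θ * T'' θ
        + ((1 / 4) * (n - 3) * (2 * n - 11) * Real.coth θ ^ 2 + lam
            + (1 / 4) * (n - 7)) * T' θ
        + (n - 3) * ((lam - 2) * Real.coth θ - (n - 4) * Real.coth θ ^ 3) * T θ
        = 0 := by
  intro θ hθ
  have hs : 0 < Real.sinh θ := Real.sinh_pos_iff.2 hθ.1
  have hsne : Real.sinh θ ≠ 0 := ne_of_gt hs
  -- product derivative chain
  have hg0 : ∀ t ∈ Ioo (0:ℝ) θ1, HasDerivAt (fun u => y1 u * y2 u)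
      ((fun t => y1' t * y2 t + y1 t * y2' t) t) t :=
    fun t ht => (hy1 t ht).mul (hy2 t ht)
  have hg0' : ∀ t ∈ Ioo (0:ℝ) θ1, HasDerivAt (fun u => y1' u * y2 u + y1 u * y2' u)
      ((fun t => y1'' t * y2 t + 2 * (y1' t * y2' t) + y1 t * y2'' t) t) t := by
    intro t ht
    have h := ((hy1' t ht).mul (hy2 t ht)).add ((hy1 t ht).mul (hy2' t ht))
    refine h.congr_deriv ?_
    ring
  have hg0'' : ∀ t ∈ Ioo (0:ℝ) θ1, HasDerivAt
      (fun u => y1'' u * y2 u + 2 * (y1' u * y2' u) + y1 u * y2'' u)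
      ((fun t => y1''' t * y2 t + 3 * (y1'' t * y2' t) + 3 * (y1' t * y2'' t)
        + y1 t * y2''' t) t) t := by
    intro t ht
    have h := (((hy1'' t ht).mul (hy2 t ht)).add
      (((hy1' t ht).mul (hy2' t ht)).const_mul (2:ℝ))).add ((hy1 t ht).mul (hy2'' t ht))
    refine h.congr_deriv ?_
    ring
  -- first application
  have e1 := step_lemma θ1 (4 - n) _ _ T T' hg0 hT' (by
    intro t ht
    rw [hT]
    ring)
  -- w1 chain
  have hw1 := deriv_comb θ1 (4 - n) _ _ _ hg0 hg0'
  have hw1' := deriv_comb2 θ1 (4 - n) _ _ _ _ hg0 hg0' hg0''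
  have e2 := step_lemma θ1 (4 - n) _ _ T' T'' hw1 hT'' e1
  have hw2 := deriv_comb θ1 (4 - n) _ _ _ hw1 hw1'
  have e3 := step_lemma θ1 (4 - n) _ _ T'' T''' hw2 hT''' e2
  -- ODE rewrites at θ
  have ediv : α ^ 2 / Real.sinh θ ^ 2 = α ^ 2 * (Real.coth θ ^ 2 - 1) := by
    rw [div_eq_mul_one_div, one_div_sinh_sq hsne]
  have h1'' : y1'' θ = -(Real.coth θ * y1' θ
      + (L - α ^ 2 * (Real.coth θ ^ 2 - 1)) * y1 θ) := by
    have h := hode1 θ hθ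
    rw [ediv] at h
    linarith
  have h2'' : y2'' θ = -(Real.coth θ * y2' θ
      + (L - α ^ 2 * (Real.coth θ ^ 2 - 1)) * y2 θ) := by
    have h := hode2 θ hθ
    rw [ediv] at h
    linarith
  have hq : HasDerivAt (fun u => L - α ^ 2 / Real.sinh u ^ 2)
      (2 * α ^ 2 * Real.cosh θ / Real.sinh θ ^ 3) θ := by
    have h1 : HasDerivAt (fun u => Real.sinh u ^ 2)
        ((2:ℕ) * Real.sinh θ ^ 1 * Real.cosh θ) θ := (Real.hasDerivAt_sinh θ).pow 2
    have h2 := (hasDerivAt_const θ (α ^ 2)).div h1 (pow_ne_zero 2 hsne)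
    have h3 := (hasDerivAt_const θ L).sub h2
    refine h3.congr_deriv ?_
    field_simp
    ring
  have h1''' : y1''' θ = -(((1 - Real.coth θ ^ 2) * y1' θ + Real.coth θ * y1'' θ)
      + (2 * α ^ 2 * Real.cosh θ / Real.sinh θ ^ 3 * y1 θ
        + (L - α ^ 2 / Real.sinh θ ^ 2) * y1' θ)) := by
    refine (hy1'' θ hθ).unique ?_
    refine HasDerivAt.congr_of_eventuallyEq
      ((((coth_hasDerivAt hsne).mul (hy1' θ hθ)).add (hq.mul (hy1 θ hθ))).neg) ?_
    filter_upwards [isOpen_Ioo.mem_nhds hθ] with u hu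
    have h := hode1 u hu
    simp only [Pi.neg_apply, Pi.add_apply, Pi.mul_apply]
    linarith
  have h2''' : y2''' θ = -(((1 - Real.coth θ ^ 2) * y2' θ + Real.coth θ * y2'' θ)
      + (2 * α ^ 2 * Real.cosh θ / Real.sinh θ ^ 3 * y2 θ
        + (L - α ^ 2 / Real.sinh θ ^ 2) * y2' θ)) := by
    refine (hy2'' θ hθ).unique ?_
    refine HasDerivAt.congr_of_eventuallyEq
      ((((coth_hasDerivAt hsne).mul (hy2' θ hθ)).add (hq.mul (hy2 θ hθ))).neg) ?_
    filter_upwards [isOpen_Ioo.mem_nhds hθ] with u hu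
    have h := hode2 u hu
    simp only [Pi.neg_apply, Pi.add_apply, Pi.mul_apply]
    linarith
  -- convert third derivatives to coth-only form
  have h1'''k : y1''' θ = -(((1 - Real.coth θ ^ 2) * y1' θ + Real.coth θ * y1'' θ)
      + (2 * α ^ 2 * (Real.coth θ * (Real.coth θ ^ 2 - 1)) * y1 θ
        + (L - α ^ 2 * (Real.coth θ ^ 2 - 1)) * y1' θ)) := by
    rw [h1''', ediv]
    have e2' := cosh_div_sinh_cube hsne
    have : 2 * α ^ 2 * Real.cosh θ / Real.sinh θ ^ 3
        = 2 * α ^ 2 * (Real.coth θ * (Real.coth θ ^ 2 - 1)) := by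
      rw [mul_div_assoc, e2']
    rw [this]
  have h2'''k : y2''' θ = -(((1 - Real.coth θ ^ 2) * y2' θ + Real.coth θ * y2'' θ)
      + (2 * α ^ 2 * (Real.coth θ * (Real.coth θ ^ 2 - 1)) * y2 θ
        + (L - α ^ 2 * (Real.coth θ ^ 2 - 1)) * y2' θ)) := by
    rw [h2''', ediv]
    have e2' := cosh_div_sinh_cube hsne
    have : 2 * α ^ 2 * Real.cosh θ / Real.sinh θ ^ 3
        = 2 * α ^ 2 * (Real.coth θ * (Real.coth θ ^ 2 - 1)) := by
      rw [mul_div_assoc, e2']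
    rw [this]
  -- assemble
  simp only [e3 θ hθ, e2 θ hθ, e1 θ hθ, hT, h1'''k, h2'''k, h1'', h2'']
  subst hα
  subst hL
  ring

end
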